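/- Let K ⊂ ℝ² be compact, let s > 0 and c > 0. Suppose (a_j, b_j) ∈ ℝ², j ∈ ℕ, converge to (a,b) ∈ ℝ², and let L_j = {(x, a_j x + b_j) : x ∈ ℝ} and L = {(x, ax + b) : x ∈ ℝ} be the corresponding lines. If H^s_∞(K ∩ L_j) ≥ c for every j, then H^s_∞(K ∩ L) ≥ c. -/

import Mathlib

open Metric MeasureTheory Filter Set
open scoped ENNReal NNReal Pointwise Topology

noncomputable section

abbrev Plane : Type := EuclideanSpace ℝ (Fin 2)

def pt (a b : ℝ) : Plane := (EuclideanSpace.equiv (Fin 2) ℝ).symm ![a, b]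

def proj (e x : Plane) : ℝ := inner ℝ x e

def lineThrough (a e : Plane) : Set Plane := {x | ∃ t : ℝ, x = a + t • e}

def dualLine (p : Plane) : Set Plane := {q | q 1 = p 0 * q 0 + p 1}

def hContent {X : Type*} [PseudoEMetricSpace X] (s : ℝ) (B : Set X) : ℝ≥0∞ :=
  ⨅ (U : ℕ → Set X) (_ : B ⊆ ⋃ i, U i), ∑' i, EMetric.diam (U i) ^ s

def covN {X : Type*} [PseudoMetricSpace X] (F : Set X) (δ : ℝ) : ℕ∞ :=
  ⨅ (G : Finset X) (_ : F ⊆ ⋃ x ∈ G, Metric.closedBall x δ), (G.card : ℕ∞)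

def upperMinkDim {X : Type*} [PseudoMetricSpace X] (F : Set X) : EReal :=
  Filter.limsup (fun δ : ℝ => ((Real.log ((covN F δ).toNat : ℝ) / Real.log (1 / δ) : ℝ) : EReal))
    (nhdsWithin 0 (Set.Ioi 0))

def packDim {X : Type*} [PseudoMetricSpace X] (K : Set X) : EReal :=
  ⨅ (F : ℕ → Set X) (_ : K ⊆ ⋃ i, F i) (_ : ∀ i, Bornology.IsBounded (F i)),
    ⨆ i, upperMinkDim (F i)

def IsDeltaSet {X : Type*} [PseudoMetricSpace X] (δ s C : ℝ) (P : Set X) : Prop :=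
  P.Finite ∧ (∀ p ∈ P, ∀ q ∈ P, p ≠ q → δ ≤ dist p q) ∧
    ∀ (x : X) (r : ℝ), δ ≤ r → r ≤ 1 →
      ((P ∩ Metric.closedBall x r).ncard : ℝ) ≤ C * (r / δ) ^ s

def CoverableBy {X : Type*} [PseudoMetricSpace X] (F : Set X) (δ m : ℝ) : Prop :=
  ∃ G : Finset X, (F ⊆ ⋃ x ∈ G, Metric.closedBall x δ) ∧ (G.card : ℝ) ≤ m

def DyadicCorner (δ : ℝ) (c : ℝ × ℝ) : Prop := ∃ m n : ℤ, c.1 = m * δ ∧ c.2 = n * δ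

def DyadicCornerIn01 (δ : ℝ) (c : ℝ × ℝ) : Prop :=
  DyadicCorner δ c ∧ c.1 ∈ Set.Ico (0:ℝ) 1 ∧ c.2 ∈ Set.Ico (0:ℝ) 1

def tube (δ : ℝ) (c : ℝ × ℝ) : Set Plane :=
  {x | ∃ u ∈ Set.Ico c.1 (c.1 + δ), ∃ v ∈ Set.Ico c.2 (c.2 + δ), x 1 = u * x 0 + v}

def parent (ρ : ℝ) (c : ℝ × ℝ) : ℝ × ℝ := (ρ * ⌊c.1 / ρ⌋, ρ * ⌊c.2 / ρ⌋)


def ordTube (δ : ℝ) (a v : Plane) : Set Plane := Metric.cthickening (δ / 2) (lineThrough a v)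

def IsOrdTube (δ : ℝ) (T : Set Plane) : Prop := ∃ a v : Plane, ‖v‖ = 1 ∧ T = ordTube δ a v

def Separated (δ : ℝ) (A : Set ℝ) : Prop := ∀ a ∈ A, ∀ b ∈ A, a ≠ b → δ ≤ |a - b|

def CoverableByIntervals (F : Set ℝ) (δ m : ℝ) : Prop :=
  ∃ G : Finset ℝ, (F ⊆ ⋃ x ∈ G, Set.Icc x (x + δ)) ∧ (G.card : ℝ) ≤ m


section Helpers
lemma pt_apply0 (a b : ℝ) : pt a b 0 = a := rfl
lemma pt_apply1 (a b : ℝ) : pt a b 1 = b := rfl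

lemma abs_coord_le_norm (x : Plane) (i : Fin 2) : |x i| ≤ ‖x‖ := by
  rw [EuclideanSpace.norm_eq]
  calc |x i| = Real.sqrt (‖x i‖ ^ 2) := by rw [Real.norm_eq_abs, Real.sqrt_sq_eq_abs, abs_abs]
    _ ≤ _ := Real.sqrt_le_sqrt
      (Finset.single_le_sum (fun j _ => sq_nonneg ‖x j‖) (Finset.mem_univ i))

lemma coord_continuous (i : Fin 2) : Continuous fun x : Plane => x i :=
  (EuclideanSpace.proj (𝕜 := ℝ) i).continuous

lemma line_closed (l : ℝ × ℝ) : IsClosed {q : Plane | q 1 = l.1 * q 0 + l.2} :=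
  isClosed_eq (coord_continuous 1) (((coord_continuous 0).const_smul l.1).add continuous_const)

lemma dist_to_line (p : Plane) (l : ℝ × ℝ) :
    dist p (pt (p 0) (l.1 * p 0 + l.2)) = |p 1 - (l.1 * p 0 + l.2)| := by
  rw [EuclideanSpace.dist_eq]
  simp [Fin.sum_univ_two, pt_apply0, pt_apply1, Real.dist_eq, Real.sqrt_sq_eq_abs, abs_abs]

end Helpers

/-- upper semicontinuity of Hausdorff content along converging lines:
if `(a_j, b_j) → (a, b)` and `H^s_∞(K ∩ L_j) ≥ c` for the lines
`L_j = {(x, a_j x + b_j)}` and a compact set `K`, then `H^s_∞(K ∩ L) ≥ c` for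
`L = {(x, ax + b)}`. -/
theorem content_semicontinuous_along_lines :
    ∀ K : Set Plane, IsCompact K →
      ∀ s c : ℝ, 0 < s → 0 < c →
        ∀ (ab : ℕ → ℝ × ℝ) (l : ℝ × ℝ),
          Filter.Tendsto ab Filter.atTop (nhds l) →
          (∀ j : ℕ, ENNReal.ofReal c ≤
            hContent s (K ∩ {q : Plane | q 1 = (ab j).1 * q 0 + (ab j).2})) →
          ENNReal.ofReal c ≤ hContent s (K ∩ {q : Plane | q 1 = l.1 * q 0 + l.2}) := by
  intro K hK s c hs hc ab l hab hge
  by_contra hlt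
  push_neg at hlt
  obtain ⟨U, hUcov, hUsum⟩ :
      ∃ U : ℕ → Set Plane,
        (K ∩ {q : Plane | q 1 = l.1 * q 0 + l.2} ⊆ ⋃ i, U i) ∧
        ∑' i, EMetric.diam (U i) ^ s < ENNReal.ofReal c := by
    unfold hContent at hlt
    rw [iInf_lt_iff] at hlt
    obtain ⟨U, hU⟩ := hlt
    rw [iInf_lt_iff] at hU
    obtain ⟨h1, h2⟩ := hU
    exact ⟨U, h1, h2⟩
  obtain ⟨η, hη, hsumη⟩ := ENNReal.lt_iff_exists_add_pos_lt.mp hUsum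
  have hdiam : ∀ i, EMetric.diam (U i) ≠ ⊤ := by
    intro i htop
    have h1 : EMetric.diam (U i) ^ s = ⊤ := (ENNReal.rpow_eq_top_iff_of_pos hs).mpr htop
    have h2 : EMetric.diam (U i) ^ s ≤ ∑' i, EMetric.diam (U i) ^ s := ENNReal.le_tsum i
    rw [h1] at h2
    exact not_top_lt (lt_of_le_of_lt h2 hUsum)
  have hchoice : ∀ i : ℕ, ∃ ε : ℝ≥0, 0 < ε ∧
      (EMetric.diam (U i) + 2 * (ε : ℝ≥0∞)) ^ s
        ≤ EMetric.diam (U i) ^ s + (η : ℝ≥0∞) * 2⁻¹ ^ (i + 1) := by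
    intro i
    set d := EMetric.diam (U i) with hd
    have htend : Tendsto (fun ε : ℝ≥0 => (d + 2 * (ε : ℝ≥0∞)) ^ s) (𝓝 0) (𝓝 (d ^ s)) := by
      have h2 : Tendsto (fun ε : ℝ≥0 => (ε : ℝ≥0∞)) (𝓝 0) (𝓝 (0 : ℝ≥0∞)) := by
        simpa using ENNReal.tendsto_coe.mpr (tendsto_id (α := ℝ≥0) (x := 𝓝 0))
      have h3 : Tendsto (fun ε : ℝ≥0 => (2 : ℝ≥0∞) * (ε : ℝ≥0∞)) (𝓝 0)
          (𝓝 ((2 : ℝ≥0∞) * 0)) := ENNReal.Tendsto.const_mul h2 (Or.inr (by norm_num))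
      have h1 : Tendsto (fun ε : ℝ≥0 => d + 2 * (ε : ℝ≥0∞)) (𝓝 0) (𝓝 d) := by
        simpa using h3.const_add d
      exact (ENNReal.continuous_rpow_const.tendsto d).comp h1
    have hlt2 : d ^ s < d ^ s + (η : ℝ≥0∞) * 2⁻¹ ^ (i + 1) := by
      refine ENNReal.lt_add_right ?_ ?_
      · exact fun h => hdiam i (by rwa [ENNReal.rpow_eq_top_iff_of_pos hs] at h)
      · exact mul_ne_zero (ENNReal.coe_ne_zero.mpr hη.ne')
          (pow_ne_zero _ (ENNReal.inv_ne_zero.mpr (by norm_num)))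
    have hev : ∀ᶠ ε : ℝ≥0 in 𝓝[>] 0,
        (d + 2 * (ε : ℝ≥0∞)) ^ s < d ^ s + (η : ℝ≥0∞) * 2⁻¹ ^ (i + 1) :=
      (htend.eventually_lt_const hlt2).filter_mono nhdsWithin_le_nhds
    obtain ⟨ε, hε1, hε2⟩ := (hev.and eventually_mem_nhdsWithin).exists
    exact ⟨ε, hε2, hε1.le⟩
  choose ε hεpos hεle using hchoice
  set V : ℕ → Set Plane := fun i => Metric.thickening (ε i) (U i) with hV
  have hVopen : ∀ i, IsOpen (V i) := fun i => Metric.isOpen_thickening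
  have hUV : ∀ i, U i ⊆ V i := fun i => Metric.self_subset_thickening (by exact_mod_cast hεpos i) _
  have hgeo : (∑' i : ℕ, ((2 : ℝ≥0∞))⁻¹ ^ (i + 1)) = 1 := by
    simp_rw [pow_succ]
    rw [ENNReal.tsum_mul_right, ENNReal.tsum_geometric, ENNReal.one_sub_inv_two, inv_inv]
    exact ENNReal.mul_inv_cancel (by norm_num) (by norm_num)
  have hVsum : ∑' i, EMetric.diam (V i) ^ s < ENNReal.ofReal c := by
    calc ∑' i, EMetric.diam (V i) ^ s
        ≤ ∑' i, (EMetric.diam (U i) ^ s + (η : ℝ≥0∞) * 2⁻¹ ^ (i + 1)) :=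
          ENNReal.tsum_le_tsum fun i =>
            le_trans (ENNReal.rpow_le_rpow (Metric.ediam_thickening_le (ε i)) hs.le) (hεle i)
      _ = (∑' i, EMetric.diam (U i) ^ s) + ∑' i, (η : ℝ≥0∞) * 2⁻¹ ^ (i + 1) :=
          ENNReal.tsum_add
      _ = (∑' i, EMetric.diam (U i) ^ s) + η := by
          rw [ENNReal.tsum_mul_left, hgeo, mul_one]
      _ < ENNReal.ofReal c := hsumη
  set W := ⋃ i, V i with hW
  have hWopen : IsOpen W := isOpen_iUnion hVopen
  have hKLW : K ∩ {q : Plane | q 1 = l.1 * q 0 + l.2} ⊆ W :=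
    hUcov.trans (iUnion_mono hUV)
  have hLne : ({q : Plane | q 1 = l.1 * q 0 + l.2}).Nonempty :=
    ⟨pt 0 l.2, by simp [mem_setOf_eq, pt_apply0, pt_apply1]⟩
  obtain ⟨r, hr, hrS⟩ : ∃ r : ℝ, 0 < r ∧
      ∀ p ∈ K \ W, r ≤ Metric.infDist p {q : Plane | q 1 = l.1 * q 0 + l.2} := by
    rcases (K \ W).eq_empty_or_nonempty with h | h
    · exact ⟨1, one_pos, by simp [h]⟩
    · obtain ⟨p0, hp0, hmin⟩ := (hK.diff hWopen).exists_isMinOn h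
        (Metric.continuous_infDist_pt _).continuousOn
      refine ⟨_, ?_, fun p hp => hmin hp⟩
      rw [← (line_closed l).notMem_iff_infDist_pos hLne]
      exact fun hmem => hp0.2 (hKLW ⟨hp0.1, hmem⟩)
  obtain ⟨M, hM⟩ := hK.isBounded.subset_closedBall 0
  set M0 : ℝ := max M 0 with hM0
  have hMK : ∀ p ∈ K, |p 0| ≤ M0 := by
    intro p hp
    have h1 : ‖p‖ ≤ M := by simpa [dist_zero_right] using hM hp
    exact (abs_coord_le_norm p 0).trans (h1.trans (le_max_left _ _))
  have hM0nn : (0 : ℝ) ≤ M0 := le_max_right _ _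
  have h1 : Tendsto (fun j => (ab j).1) atTop (𝓝 l.1) := (continuous_fst.tendsto l).comp hab
  have h2 : Tendsto (fun j => (ab j).2) atTop (𝓝 l.2) := (continuous_snd.tendsto l).comp hab
  have e1 : ∀ᶠ j in atTop, |(ab j).1 - l.1| < r / (2 * (M0 + 1)) :=
    h1.eventually (eventually_abs_sub_lt _ (by positivity))
  have e2 : ∀ᶠ j in atTop, |(ab j).2 - l.2| < r / 2 :=
    h2.eventually (eventually_abs_sub_lt _ (by positivity))
  obtain ⟨j, hj1, hj2⟩ := (e1.and e2).exists
  have hsub : K ∩ {q : Plane | q 1 = (ab j).1 * q 0 + (ab j).2} ⊆ ⋃ i, V i := by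
    intro p hp
    by_contra hpW
    have hpKW : p ∈ K \ W := ⟨hp.1, hpW⟩
    have hd := hrS p hpKW
    have hdist : Metric.infDist p {q : Plane | q 1 = l.1 * q 0 + l.2}
        ≤ |p 1 - (l.1 * p 0 + l.2)| := by
      rw [← dist_to_line]
      exact Metric.infDist_le_dist_of_mem (by simp [mem_setOf_eq, pt_apply0, pt_apply1])
    have hp1 : p 1 = (ab j).1 * p 0 + (ab j).2 := hp.2
    have hB : |p 0| ≤ M0 := hMK p hp.1
    have hj1' : |(ab j).1 - l.1| * (2 * (M0 + 1)) < r :=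
      (lt_div_iff₀ (by positivity)).mp hj1
    have habs : |p 1 - (l.1 * p 0 + l.2)| < r := by
      rw [hp1]
      have heq : (ab j).1 * p 0 + (ab j).2 - (l.1 * p 0 + l.2)
          = ((ab j).1 - l.1) * p 0 + ((ab j).2 - l.2) := by ring
      rw [heq]
      have h3 : |((ab j).1 - l.1) * p 0 + ((ab j).2 - l.2)|
          ≤ |(ab j).1 - l.1| * |p 0| + |(ab j).2 - l.2| := by
        calc _ ≤ |((ab j).1 - l.1) * p 0| + |(ab j).2 - l.2| := abs_add_le _ _
          _ = _ := by rw [abs_mul]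
      nlinarith [mul_nonneg (abs_nonneg ((ab j).1 - l.1)) (sub_nonneg.mpr hB),
        abs_nonneg ((ab j).1 - l.1), hj2, h3, hM0nn]
    exact absurd hd (not_le.mpr (hdist.trans_lt habs))
  have hle : hContent s (K ∩ {q : Plane | q 1 = (ab j).1 * q 0 + (ab j).2})
      ≤ ∑' i, EMetric.diam (V i) ^ s := by
    unfold hContent
    exact iInf₂_le V hsub
  exact absurd ((hge j).trans hle) (not_le.mpr hVsum)
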